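/- For any integers n ≥ 0, m ≥ 1 and any prime p not dividing m, the polynomial congruence x^m · Σ_{j=0}^{n} s(n,j) Σ_{k=1}^{p-1} (−m)^{p-1-k} B_{j+k}(x) ≡ (−1)^{m+n-1} x^p · D_{m+n-1}(1−x) (mod p) holds coefficientwise. -/

import Mathlib

open Polynomial Finset

/-- Stirling numbers of the second kind. -/
def stirling2 : ℕ → ℕ → ℕ
  | 0, 0 => 1
  | 0, _ + 1 => 0
  | _ + 1, 0 => 0
  | n + 1, k + 1 => (k + 1) * stirling2 n (k + 1) + stirling2 n k

/-- Signed Stirling numbers of the first kind. -/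
def stirling1 : ℕ → ℕ → ℤ
  | 0, 0 => 1
  | 0, _ + 1 => 0
  | n + 1, 0 => -(n : ℤ) * stirling1 n 0
  | n + 1, k + 1 => stirling1 n k - (n : ℤ) * stirling1 n (k + 1)

/-- The Bell polynomial `B_m(x) = ∑_{j=0}^m S(m,j) x^j` over `ℤ`. -/
noncomputable def bellPoly (m : ℕ) : Polynomial ℤ :=
  ∑ j ∈ range (m + 1), (stirling2 m j : ℤ) • X ^ j

/-- The derangement polynomial `D_m(x) = ∑_{j=0}^m C(m,j) j! (x-1)^{m-j}` over `ℤ`. -/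
noncomputable def derPoly (m : ℕ) : Polynomial ℤ :=
  ∑ j ∈ range (m + 1), ((m.choose j * j.factorial : ℕ) : ℤ) • (X - 1) ^ (m - j)

/-- The Bell numbers `B_m = ∑_j S(m,j)`. -/
def bell (m : ℕ) : ℕ := ∑ j ∈ range (m + 1), stirling2 m j

lemma stirling2_zero_of_lt : ∀ {n k : ℕ}, n < k → stirling2 n k = 0
  | 0, k + 1, _ => rfl
  | n + 1, k + 1, h => by
    have h1 : n < k + 1 := Nat.lt_of_succ_lt h
    have h2 : n < k := Nat.lt_of_succ_lt_succ h
    simp [stirling2, stirling2_zero_of_lt h1, stirling2_zero_of_lt h2]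

lemma stirling2_succ_sum (i l : ℕ) :
    stirling2 (i + 1) (l + 1) = ∑ j ∈ range (i + 1), i.choose j * stirling2 j l := by
  induction i generalizing l with
  | zero => cases l <;> simp [stirling2]
  | succ i ih =>
    have step1 : ∑ j ∈ range (i + 2), (i+1).choose j * stirling2 j l
        = (∑ j ∈ range (i + 1), i.choose j * stirling2 (j+1) l)
          + ∑ j ∈ range (i + 2), i.choose j * stirling2 j l := by
      rw [Finset.sum_range_succ' (fun j => (i+1).choose j * stirling2 j l) (i+1),
          Finset.sum_range_succ' (fun j => i.choose j * stirling2 j l) (i+1)]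
      simp_rw [Nat.choose_succ_succ i, add_mul, Finset.sum_add_distrib]
      simp [Nat.choose]
      ring
    have step2 : ∑ j ∈ range (i + 2), i.choose j * stirling2 j l = stirling2 (i+1) (l+1) := by
      rw [Finset.sum_range_succ, Nat.choose_succ_self, ih l]
      simp
    rw [step1, step2]
    cases l with
    | zero =>
      have : ∀ j, stirling2 (j+1) 0 = 0 := fun j => rfl
      simp only [this, mul_zero, Finset.sum_const_zero, zero_add]
      show stirling2 (i+2) 1 = _
      have : stirling2 (i+2) 1 = 1 * stirling2 (i+1) 1 + stirling2 (i+1) 0 := rfl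
      rw [this]
      simp [show stirling2 (i+1) 0 = 0 from rfl]
    | succ l' =>
      have expand : ∀ j, stirling2 (j+1) (l'+1) = (l'+1) * stirling2 j (l'+1) + stirling2 j l' :=
        fun j => rfl
      simp_rw [expand, mul_add, Finset.sum_add_distrib]
      have swap : ∑ j ∈ range (i+1), i.choose j * ((l'+1) * stirling2 j (l'+1))
          = (l'+1) * ∑ j ∈ range (i+1), i.choose j * stirling2 j (l'+1) := by
        rw [Finset.mul_sum]; exact Finset.sum_congr rfl (fun _ _ => by ring)
      rw [swap, ← ih l', ← ih (l'+1)]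
      show stirling2 (i+2) (l'+2) = _
      have : stirling2 (i+2) (l'+2) = (l'+2) * stirling2 (i+1) (l'+2) + stirling2 (i+1) (l'+1) := rfl
      rw [this]; ring


lemma stirling2_succ_zero (n : ℕ) : stirling2 (n + 1) 0 = 0 := rfl

lemma bellPoly_zero : bellPoly 0 = 1 := by
  unfold bellPoly
  simp [stirling2]

lemma bellPoly_eq (m : ℕ) : bellPoly m = ∑ j ∈ range (m + 1), C ((stirling2 m j : ℤ)) * X ^ j := by
  unfold bellPoly; simp_rw [smul_eq_C_mul]

lemma bellPoly_eq_big (m N : ℕ) (h : m < N) :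
    bellPoly m = ∑ j ∈ range N, C ((stirling2 m j : ℤ)) * X ^ j := by
  rw [bellPoly_eq]
  apply Finset.sum_subset (by intro x hx; simp at hx ⊢; omega)
  intro x hx hnx
  simp only [Finset.mem_range] at hx hnx
  rw [stirling2_zero_of_lt (by omega)]
  simp

lemma bellPoly_succ (n : ℕ) :
    bellPoly (n + 1) = X * ∑ k ∈ range (n + 1), C ((n.choose k : ℤ)) * bellPoly k := by
  have rhs : ∑ k ∈ range (n + 1), C ((n.choose k : ℤ)) * bellPoly k
      = ∑ l ∈ range (n + 1), C ((stirling2 (n+1) (l+1) : ℤ)) * X ^ l := by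
    have : ∀ k ∈ range (n+1), C ((n.choose k : ℤ)) * bellPoly k
        = ∑ l ∈ range (n + 1), C ((n.choose k * stirling2 k l : ℕ) : ℤ) * X ^ l := by
      intro k hk
      rw [bellPoly_eq_big k (n+1) (by simpa using hk), Finset.mul_sum]
      exact Finset.sum_congr rfl (fun l _ => by rw [Nat.cast_mul, map_mul]; ring)
    rw [Finset.sum_congr rfl this, Finset.sum_comm]
    refine Finset.sum_congr rfl (fun l _ => ?_)
    rw [stirling2_succ_sum n l, ← Finset.sum_mul]
    congr 1
    rw [← map_sum C]
    congr 1
    push_cast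
    rfl
  rw [rhs, bellPoly_eq, Finset.sum_range_succ' _ (n+1)]
  rw [stirling2_succ_zero, Finset.mul_sum]
  push_cast
  simp only [mul_zero, zero_mul, map_zero, pow_zero, mul_one, add_zero]
  exact Finset.sum_congr rfl (fun l _ => by ring)

section phiSection

variable {R : Type*} [CommRing R]

noncomputable def bellR (R : Type*) [CommRing R] (k : ℕ) : R[X] :=
  (bellPoly k).map (Int.castRingHom R)

lemma bellR_zero : bellR R 0 = 1 := by simp [bellR, bellPoly_zero]

lemma bellR_succ (n : ℕ) :
    bellR R (n + 1) = X * ∑ k ∈ range (n + 1), C ((n.choose k : R)) * bellR R k := by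
  unfold bellR
  rw [bellPoly_succ, Polynomial.map_mul, Polynomial.map_X, Polynomial.map_sum]
  congr 1
  refine Finset.sum_congr rfl fun k _ => ?_
  rw [Polynomial.map_mul, map_C]
  simp

noncomputable def phiFun (f : R[X]) : R[X] := f.sum fun k a => C a * bellR R k

lemma phiFun_add (f g : R[X]) : phiFun (f + g) = phiFun f + phiFun g :=
  Polynomial.sum_add_index f g _ (fun k => by simp) (fun k b c => by rw [map_add, add_mul])

noncomputable def phi : R[X] →+ R[X] := AddMonoidHom.mk' phiFun phiFun_add

lemma phi_monomial (k : ℕ) (a : R) : phi (monomial k a) = C a * bellR R k := by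
  show phiFun _ = _
  unfold phiFun
  rw [Polynomial.sum_monomial_index]
  simp

lemma phi_C_mul_X_pow (k : ℕ) (a : R) : phi (C a * X ^ k) = C a * bellR R k := by
  rw [C_mul_X_pow_eq_monomial, phi_monomial]

lemma phi_X_pow (k : ℕ) : phi (X ^ k : R[X]) = bellR R k := by
  simpa using phi_C_mul_X_pow k (1 : R)

lemma phi_one : phi (1 : R[X]) = 1 := by
  simpa [bellR_zero] using phi_X_pow (R := R) 0

lemma phi_C_mul (a : R) (f : R[X]) : phi (C a * f) = C a * phi f := by
  induction f using Polynomial.induction_on' with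
  | add p q hp hq => rw [mul_add, map_add, hp, hq, map_add, mul_add]
  | monomial n b =>
    rw [phi_monomial, ← C_mul_X_pow_eq_monomial, ← mul_assoc, ← map_mul,
      phi_C_mul_X_pow, map_mul, mul_assoc]

lemma phi_X_mul (g : R[X]) : phi (X * g) = X * phi (g.comp (X + 1)) := by
  induction g using Polynomial.induction_on' with
  | add p q hp hq => rw [mul_add, map_add, hp, hq, add_comp, map_add, mul_add]
  | monomial n b =>
    rw [X_mul_monomial, phi_monomial, ← C_mul_X_pow_eq_monomial, mul_comp, C_comp, X_pow_comp,
      phi_C_mul, bellR_succ, mul_left_comm]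
    congr 2
    rw [add_pow, map_sum]
    refine (Finset.sum_congr rfl fun k hk => ?_).symm
    rw [one_pow, mul_one, mul_comm, ← C_eq_natCast, phi_C_mul_X_pow]

noncomputable def ffall (R : Type*) [CommRing R] (n : ℕ) : R[X] :=
  ∏ i ∈ range n, (X - C (i : R))

lemma ffall_succ (n : ℕ) : ffall R (n + 1) = ffall R n * (X - C (n : R)) :=
  Finset.prod_range_succ _ n

lemma phi_ffall_mul (n : ℕ) (f : R[X]) :
    phi (ffall R n * f) = X ^ n * phi (f.comp (X + C (n : R))) := by
  induction n generalizing f with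
  | zero =>
    have : ffall R 0 = 1 := rfl
    simp [this]
  | succ n ih =>
    have h1 : ffall R (n+1) * f = ffall R n * ((X - C (n : R)) * f) := by
      rw [ffall_succ]; ring
    rw [h1, ih, mul_comp, sub_comp, X_comp, C_comp, add_sub_cancel_right, phi_X_mul,
      comp_assoc]
    have h2 : (X + C (n : R)).comp (X + 1) = X + C ((n + 1 : ℕ) : R) := by
      push_cast
      simp [add_comp]
      ring
    rw [h2, pow_succ]
    ring

lemma phi_ffall (n : ℕ) : phi (ffall R n) = X ^ n := by
  simpa [phi_one] using phi_ffall_mul n (1 : R[X])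

noncomputable def gp (R : Type*) [CommRing R] (s : ℕ) : R[X] :=
  ∏ i ∈ range s, (X - C ((i + 1 : ℕ) : R))

lemma X_mul_gp (s : ℕ) : X * gp R s = ffall R (s + 1) := by
  rw [ffall, Finset.prod_range_succ' (fun i => (X : R[X]) - C (i : R)) s]
  simp [gp, mul_comm]

lemma gp_succ (s : ℕ) :
    gp R (s + 1) = ffall R (s + 1) - C ((s + 1 : ℕ) : R) * gp R s := by
  rw [gp, Finset.prod_range_succ, ← gp, mul_sub, mul_comm (gp R s) X, X_mul_gp]
  ring

lemma derPoly_zero : derPoly 0 = 1 := by simp [derPoly]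

lemma derPoly_succ (s : ℕ) :
    derPoly (s + 1) = C ((s + 1 : ℕ) : ℤ) * derPoly s + (X - 1) ^ (s + 1) := by
  rw [derPoly, Finset.sum_range_succ' _ (s + 1)]
  have h0 : (((s+1).choose 0 * Nat.factorial 0 : ℕ) : ℤ) • ((X : ℤ[X]) - 1) ^ (s + 1 - 0) =
      (X - 1) ^ (s + 1) := by simp
  rw [h0]
  congr 1
  rw [derPoly, Finset.mul_sum]
  refine Finset.sum_congr rfl fun j hj => ?_
  have key : (s+1).choose (j+1) * (j+1).factorial = (s + 1) * (s.choose j * j.factorial) := by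
    have h : (s+1).choose (j+1) * (j+1) = (s+1) * s.choose j := (Nat.add_one_mul_choose_eq s j).symm
    calc (s+1).choose (j+1) * (j+1).factorial
        = ((s+1).choose (j+1) * (j+1)) * j.factorial := by rw [Nat.factorial_succ]; ring
      _ = ((s+1) * s.choose j) * j.factorial := by rw [h]
      _ = (s + 1) * (s.choose j * j.factorial) := by ring
  rw [key]
  have : s + 1 - (j + 1) = s - j := by omega
  rw [this]
  simp only [smul_eq_C_mul, Nat.cast_mul, map_mul]
  ring

noncomputable def ersR (R : Type*) [CommRing R] (s : ℕ) : R[X] :=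
  ((derPoly s).map (Int.castRingHom R)).comp (1 - X)

lemma ersR_zero : ersR R 0 = 1 := by simp [ersR, derPoly_zero]

lemma ersR_succ (s : ℕ) :
    ersR R (s + 1) = C ((s + 1 : ℕ) : R) * ersR R s + (- X) ^ (s + 1) := by
  unfold ersR
  rw [derPoly_succ, Polynomial.map_add, Polynomial.map_mul, Polynomial.map_pow,
    Polynomial.map_sub, Polynomial.map_one, map_C, Polynomial.map_X, add_comp, mul_comp,
    C_comp, pow_comp, sub_comp, X_comp, one_comp]
  simp only [eq_intCast, Int.cast_add, Int.cast_natCast, Int.cast_one]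
  push_cast
  ring

lemma phi_gp (s : ℕ) : phi (gp R s) = (-1) ^ s * ersR R s := by
  induction s with
  | zero =>
    have : gp R 0 = 1 := rfl
    simp [this, phi_one, ersR_zero]
  | succ s ih =>
    rw [gp_succ, map_sub, phi_C_mul, ih, phi_ffall, ersR_succ]
    have hx : ((-X : R[X])) ^ (s+1) = (-1)^(s+1) * X^(s+1) := by rw [neg_pow]
    rw [hx]
    have haa : ((-1 : R[X]))^s * (-1)^s = 1 := by
      rw [← pow_add]; exact Even.neg_one_pow ⟨s, rfl⟩
    have hp : ((-1 : R[X]))^(s+1) = (-1)^s * (-1) := pow_succ _ _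
    rw [hp]
    linear_combination (-(X^(s+1))) * haa

lemma stirling1_zero_of_lt : ∀ {n k : ℕ}, n < k → stirling1 n k = 0
  | 0, k + 1, _ => rfl
  | n + 1, k + 1, h => by
    have h1 : n < k + 1 := Nat.lt_of_succ_lt h
    have h2 : n < k := Nat.lt_of_succ_lt_succ h
    simp [stirling1, stirling1_zero_of_lt h1, stirling1_zero_of_lt h2]

lemma stirling1_gen (n : ℕ) :
    ∑ j ∈ range (n + 1), C (stirling1 n j) * X ^ j = ffall ℤ n := by
  induction n with
  | zero => simp [ffall, stirling1]
  | succ n ih =>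
    rw [Finset.sum_range_succ' _ (n + 1)]
    have key : ∀ j ∈ range (n+1), C (stirling1 (n+1) (j+1)) * X ^ (j+1)
        = C (stirling1 n j) * X ^ (j+1) - C ((n:ℤ)) * (C (stirling1 n (j+1)) * X ^ (j+1)) := by
      intro j _
      have : stirling1 (n+1) (j+1) = stirling1 n j - (n : ℤ) * stirling1 n (j + 1) := rfl
      rw [this, map_sub, map_mul]
      ring
    rw [Finset.sum_congr rfl key, Finset.sum_sub_distrib, ← Finset.mul_sum]
    have A : ∑ j ∈ range (n+1), C (stirling1 n j) * X ^ (j+1) = X * ffall ℤ n := by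
      rw [← ih, Finset.mul_sum]
      exact Finset.sum_congr rfl fun j _ => by ring
    have B : ∑ j ∈ range (n+1), C (stirling1 n (j+1)) * X ^ (j+1)
        = ffall ℤ n - C (stirling1 n 0) := by
      have ext : ∑ j ∈ range (n+2), C (stirling1 n j) * X ^ j = ffall ℤ n := by
        rw [Finset.sum_range_succ, stirling1_zero_of_lt (Nat.lt_succ_self n), ← ih]
        simp
      have := Finset.sum_range_succ' (fun j => C (stirling1 n j) * X ^ j) (n+1)
      rw [ext] at this
      rw [eq_sub_iff_add_eq, this]
      simp
    have z0 : C (stirling1 (n+1) 0) = - (C ((n:ℤ)) * C (stirling1 n 0)) := by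
      have : stirling1 (n+1) 0 = -(n : ℤ) * stirling1 n 0 := rfl
      rw [this, map_mul, map_neg]
      ring
    rw [A, B, z0, ffall_succ]
    push_cast
    ring

end phiSection

section modp

variable (p : ℕ) [hp : Fact p.Prime]

lemma ffall_card : ffall (ZMod p) p = X ^ p - X := by
  have hp2 : 1 < p := hp.out.one_lt
  have hq : Fintype.card (ZMod p) = p := ZMod.card p
  have hmonic : (X ^ p - X : (ZMod p)[X]).Monic := by
    apply Polynomial.monic_X_pow_sub
    rw [degree_X]
    exact_mod_cast hp2
  have hroots : (X ^ p - X : (ZMod p)[X]).roots = Finset.univ.val := by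
    have := FiniteField.roots_X_pow_card_sub_X (ZMod p)
    rwa [hq] at this
  have hcard : Multiset.card (X ^ p - X : (ZMod p)[X]).roots
      = (X ^ p - X : (ZMod p)[X]).natDegree := by
    rw [hroots, FiniteField.X_pow_card_sub_X_natDegree_eq _ hp2]
    simpa using hq
  have := Polynomial.C_leadingCoeff_mul_prod_multiset_X_sub_C (p := (X ^ p - X : (ZMod p)[X])) hcard
  rw [hmonic.leadingCoeff, map_one, one_mul, hroots] at this
  have huniv : (Multiset.map (fun a => X - C a) Finset.univ.val).prod
      = ∏ a : ZMod p, (X - C a) := rfl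
  rw [huniv] at this
  rw [← this, ffall]
  exact Finset.prod_bij' (fun i _ => (i : ZMod p)) (fun a _ => a.val)
    (fun i _ => Finset.mem_univ _)
    (fun a _ => Finset.mem_range.mpr (ZMod.val_lt a))
    (fun i hi => ZMod.val_cast_of_lt (Finset.mem_range.mp hi))
    (fun a _ => ZMod.natCast_rightInverse a)
    (fun i _ => rfl)

section geom
variable {R : Type*} [CommRing R]

lemma geom_tel (c : R) (q : ℕ) :
    (X - C c) * ∑ i ∈ range q, C (c ^ (q - 1 - i)) * X ^ (i + 1)
      = X ^ (q + 1) - C (c ^ q) * X := by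
  induction q with
  | zero => simp
  | succ q ih =>
    rw [Finset.sum_range_succ]
    have h1 : ∀ i ∈ range q, C (c ^ (q + 1 - 1 - i)) * (X : R[X]) ^ (i + 1)
        = C c * (C (c ^ (q - 1 - i)) * X ^ (i + 1)) := by
      intro i hi
      have : q + 1 - 1 - i = (q - 1 - i) + 1 := by
        have := Finset.mem_range.mp hi; omega
      rw [this, pow_succ, map_mul]
      ring
    rw [Finset.sum_congr rfl h1, ← Finset.mul_sum]
    have h2 : q + 1 - 1 - q = 0 := by omega
    rw [h2, pow_zero, map_one, one_mul, mul_add, mul_comm (X - C c) (C c * _), mul_assoc,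
      mul_comm _ (X - C c), ih]
    rw [pow_succ (c) q, map_mul]
    ring

end geom

variable (p : ℕ) [hp : Fact p.Prime]

lemma map_derPoly_p :
    (derPoly p).map (Int.castRingHom (ZMod p)) = (X - 1) ^ p := by
  unfold derPoly
  rw [Polynomial.map_sum]
  rw [Finset.sum_eq_single 0]
  · simp
  · intro j hj hj0
    have hjp : j ≤ p := by simpa using Nat.lt_succ_iff.mp (Finset.mem_range.mp hj)
    have hdvd : p ∣ p.choose j * j.factorial := by
      rcases eq_or_lt_of_le hjp with h | h
      · subst h
        exact Dvd.dvd.mul_left (Nat.dvd_factorial hp.out.pos le_rfl) _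
      · exact Dvd.dvd.mul_right (hp.out.dvd_choose_self hj0 h) _
    rw [smul_eq_C_mul, Polynomial.map_mul, map_C]
    have : ((Int.castRingHom (ZMod p)) ((p.choose j * j.factorial : ℕ) : ℤ)) = 0 := by
      simp only [eq_intCast, Int.cast_natCast]
      exact (ZMod.natCast_eq_zero_iff _ _).mpr hdvd
    rw [this, map_zero, zero_mul]
  · intro h
    simp at h

lemma neg_one_pow_card : ((-1 : (ZMod p)[X])) ^ p = -1 := by
  have : ((-1 : (ZMod p)[X])) = C (-1) := by simp
  rw [this, ← map_pow, ZMod.pow_card]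

lemma neg_X_pow_card : ((-X : (ZMod p)[X])) ^ p = -(X ^ p) := by
  rw [neg_pow, neg_one_pow_card]
  ring

lemma ersR_card : ersR (ZMod p) p = -(X ^ p) := by
  unfold ersR
  rw [map_derPoly_p, pow_comp, sub_comp, X_comp, one_comp]
  have : (1 : (ZMod p)[X]) - X - 1 = -X := by ring
  rw [this, neg_X_pow_card]

lemma ersR_add_card (k : ℕ) : ersR (ZMod p) (k + p) = -(X ^ p) * ersR (ZMod p) k := by
  induction k with
  | zero => rw [zero_add, ersR_card, ersR_zero, mul_one]
  | succ k ih =>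
    have h1 : k + 1 + p = (k + p) + 1 := by omega
    rw [h1, ersR_succ, ih, ersR_succ]
    have h2 : ((k + p + 1 : ℕ) : ZMod p) = ((k + 1 : ℕ) : ZMod p) := by
      push_cast
      simp [ZMod.natCast_self]
    rw [h2]
    have h3 : ((-X : (ZMod p)[X])) ^ (k + p + 1) = (-X) ^ (k+1) * (-(X ^ p)) := by
      rw [show k + p + 1 = (k + 1) + p by omega, pow_add, neg_X_pow_card]
    rw [h3]
    ring

lemma ersR_add_mul_card (s t : ℕ) :
    ersR (ZMod p) (s + t * p) = (-(X ^ p)) ^ t * ersR (ZMod p) s := by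
  induction t with
  | zero => simp
  | succ t ih =>
    have h1 : s + (t + 1) * p = (s + t * p) + p := by ring
    rw [h1, ersR_add_card, ih, pow_succ]
    ring


end modp

lemma ffall_map {R : Type*} [CommRing R] (n : ℕ) :
    (ffall ℤ n).map (Int.castRingHom R) = ffall R n := by
  unfold ffall
  rw [Polynomial.map_prod]
  refine Finset.prod_congr rfl fun i _ => ?_
  rw [Polynomial.map_sub, Polynomial.map_X, map_C]
  simp

theorem sun_zagier_poly' (n m p : ℕ) (hm : 1 ≤ m) (hp : p.Prime) (hpm : ¬ p ∣ m) :
    ∀ i, (p : ℤ) ∣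
      (X ^ m * ∑ j ∈ range (n + 1), C (stirling1 n j) *
          ∑ k ∈ Icc 1 (p - 1), C ((-(m : ℤ)) ^ (p - 1 - k)) * bellPoly (j + k) -
        (-1) ^ (m + n - 1) * X ^ p * (derPoly (m + n - 1)).comp (1 - X)).coeff i := by
  haveI : Fact p.Prime := ⟨hp⟩
  set K := ZMod p
  set f : ℤ →+* K := Int.castRingHom K with hf
  suffices h : (X ^ m * ∑ j ∈ range (n + 1), C (stirling1 n j) *
          ∑ k ∈ Icc 1 (p - 1), C ((-(m : ℤ)) ^ (p - 1 - k)) * bellPoly (j + k) -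
        (-1) ^ (m + n - 1) * X ^ p * (derPoly (m + n - 1)).comp (1 - X)).map f = 0 by
    intro i
    have h2 := congrArg (fun q => q.coeff i) h
    simp only [coeff_map, coeff_zero] at h2
    exact (ZMod.intCast_zmod_eq_zero_iff_dvd _ p).mp h2
  -- numeric setup
  have hppos : 0 < p := hp.pos
  have hmn : 1 ≤ m + n := le_trans hm (Nat.le_add_right m n)
  set s0 := (m + n - 1) % p with hs0def
  set t := (m + n - 1) / p with htdef
  have hs0lt : s0 < p := Nat.mod_lt _ hppos
  have hdm : p * t + s0 = m + n - 1 := Nat.div_add_mod _ _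
  set r := p - 1 - s0 with hrdef
  have hrlt : r < p := by omega
  have hs0r : p - 1 - r = s0 := by omega
  -- the key ZMod constants
  set c : K := -(m : K) with hc
  have hmne : (m : K) ≠ 0 := by
    intro h0
    exact hpm ((ZMod.natCast_eq_zero_iff m p).mp h0)
  have hcne : c ≠ 0 := neg_ne_zero.mpr hmne
  have hrcast : ((r : ℕ) : K) = c - (n : K) := by
    have h1 : ((r : ℕ) : K) = ((p - 1 : ℕ) : K) - (s0 : K) := by
      rw [hrdef, Nat.cast_sub (by omega)]
    have h2 : ((p - 1 : ℕ) : K) = -1 := by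
      rw [Nat.cast_sub (by omega)]
      simp [ZMod.natCast_self]
    have h3 : ((s0 : ℕ) : K) = ((m + n : K)) - 1 := by
      rw [hs0def, ZMod.natCast_mod, Nat.cast_sub hmn]
      push_cast
      ring
    rw [h1, h2, h3, hc]
    push_cast
    ring
  -- abbreviations
  set SP : K[X] := ∑ k ∈ Icc 1 (p - 1), C (c ^ (p - 1 - k)) * X ^ k with hSP
  -- geometric identity
  have hgeo : (X - C c) * SP = X ^ p - X := by
    have hIcc : Icc 1 (p - 1) = Ico 1 p := by
      rw [← Finset.Ico_add_one_right_eq_Icc]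
      congr 1
      omega
    rw [hSP, hIcc, Finset.sum_Ico_eq_sum_range]
    have hq : p - 1 = p - 1 := rfl
    have hcon : ∀ i ∈ range (p - 1),
        C (c ^ (p - 1 - (1 + i))) * (X : K[X]) ^ (1 + i)
          = C (c ^ (p - 1 - 1 - i)) * X ^ (i + 1) := by
      intro i hi
      have : p - 1 - (1 + i) = p - 1 - 1 - i := by omega
      rw [this, add_comm 1 i]
    rw [Finset.sum_congr rfl hcon, geom_tel c (p - 1)]
    have h1 : p - 1 + 1 = p := by omega
    rw [h1, ZMod.pow_card_sub_one_eq_one hcne]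
    simp
  -- composed identity
  have hcomp : (X - C ((r : ℕ) : K)) * SP.comp (X + C (n : K)) = X ^ p - X := by
    have := congrArg (fun q => q.comp (X + C (n : K))) hgeo
    simp only [mul_comp, sub_comp, X_comp, C_comp, pow_comp] at this
    have hXp : ((X : K[X]) + C (n : K)) ^ p = X ^ p + C (n : K) := by
      rw [add_pow_char, ← map_pow, ZMod.pow_card]
    rw [hXp] at this
    have harr : (X : K[X]) + C (n : K) - C c = X - C ((r : ℕ) : K) := by
      rw [hrcast, map_sub]
      ring
    rw [harr] at this
    rw [this]
    ring
  -- the split of ffall p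
  set tail : K[X] := ∏ i ∈ Ico (r + 1) p, (X - C (i : K)) with htail
  have hsplit : X ^ p - X = (X - C ((r : ℕ) : K)) * (ffall K r * tail) := by
    rw [← ffall_card p]
    show ffall K p = _
    have h1 : ffall K p = (∏ i ∈ range (r + 1), (X - C (i : K))) * tail := by
      rw [ffall, htail, Finset.prod_range_mul_prod_Ico _ (by omega)]
    rw [h1, Finset.prod_range_succ]
    show ffall K r * (X - C ((r : ℕ) : K)) * tail = _
    ring
  have hSPcomp : SP.comp (X + C (n : K)) = ffall K r * tail := by
    have hne : (X - C ((r : ℕ) : K)) ≠ 0 := X_sub_C_ne_zero _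
    apply mul_left_cancel₀ hne
    rw [hcomp, hsplit]
  -- tail composed
  have htailcomp : tail.comp (X + C ((r : ℕ) : K)) = gp K s0 := by
    rw [htail, Polynomial.prod_comp]
    have hcon : ∀ i ∈ Ico (r + 1) p,
        ((X - C (i : K)).comp (X + C ((r : ℕ) : K))) = X - C (((i - r : ℕ)) : K) := by
      intro i hi
      have hir : r ≤ i := by
        have := (Finset.mem_Ico.mp hi).1; omega
      rw [sub_comp, X_comp, C_comp, Nat.cast_sub hir, map_sub]
      ring
    rw [Finset.prod_congr rfl hcon, Finset.prod_Ico_eq_prod_range]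
    have h1 : p - (r + 1) = s0 := by omega
    rw [h1, gp]
    refine Finset.prod_congr rfl fun i _ => ?_
    have : r + 1 + i - r = i + 1 := by omega
    rw [this]
  -- now the left side
  have hA : (∑ j ∈ range (n + 1), C (stirling1 n j) *
          ∑ k ∈ Icc 1 (p - 1), C ((-(m : ℤ)) ^ (p - 1 - k)) * bellPoly (j + k)).map f
      = phi (ffall K n * SP) := by
    have hG : (∑ j ∈ range (n + 1), C ((stirling1 n j : ℤ) : K) * X ^ j) = ffall K n := by
      have := congrArg (Polynomial.map f) (stirling1_gen n)
      rw [Polynomial.map_sum, ffall_map] at this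
      rw [← this]
      refine Finset.sum_congr rfl fun j _ => ?_
      rw [Polynomial.map_mul, map_C, Polynomial.map_pow, Polynomial.map_X]
      simp [hf, Polynomial.C_eq_intCast]
    have hGS : ffall K n * SP = ∑ j ∈ range (n + 1), ∑ k ∈ Icc 1 (p - 1),
        C ((stirling1 n j : ℤ) : K) * (C (c ^ (p - 1 - k)) * X ^ (j + k)) := by
      rw [← hG, hSP, Finset.sum_mul_sum]
      refine Finset.sum_congr rfl fun j _ => Finset.sum_congr rfl fun k _ => ?_
      rw [pow_add]
      ring
    rw [hGS, map_sum, Polynomial.map_sum]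
    refine Finset.sum_congr rfl fun j _ => ?_
    rw [Polynomial.map_mul, map_C, Polynomial.map_sum, map_sum, Finset.mul_sum]
    refine Finset.sum_congr rfl fun k _ => ?_
    rw [Polynomial.map_mul, map_C, phi_C_mul, phi_C_mul_X_pow]
    have hcc : f ((-(m : ℤ)) ^ (p - 1 - k)) = c ^ (p - 1 - k) := by
      rw [map_pow, hc]
      simp [hf]
    have hss : f (stirling1 n j) = ((stirling1 n j : ℤ) : K) := by simp [hf]
    rw [hcc, hss]
    show _ = C ((stirling1 n j : ℤ) : K) * (C (c ^ (p-1-k)) * bellR K (j + k))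
    rfl
  -- assemble
  rw [Polynomial.map_sub, Polynomial.map_mul, Polynomial.map_pow, Polynomial.map_X, hA]
  have hR : (((-1 : ℤ[X]))^(m+n-1) * X^p * (derPoly (m+n-1)).comp (1 - X)).map f
      = (-1)^(m+n-1) * X^p * ersR K (m+n-1) := by
    rw [Polynomial.map_mul, Polynomial.map_mul, Polynomial.map_pow, Polynomial.map_pow,
      Polynomial.map_X, Polynomial.map_comp, Polynomial.map_sub, Polynomial.map_one,
      Polynomial.map_X, Polynomial.map_neg, Polynomial.map_one]
    rfl
  rw [hR]
  have hL2 : phi (ffall K n * SP) = X ^ n * (X ^ r * ((-1)^s0 * ersR K s0)) := by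
    rw [phi_ffall_mul, hSPcomp, phi_ffall_mul, htailcomp, phi_gp]
  rw [hL2]
  have hdm2 : t * p + s0 = m + n - 1 := by rw [mul_comm t p]; exact hdm
  have hmn1 : m + n - 1 = s0 + t * p := by omega
  have hers : ersR K (m + n - 1) = (-(X^p))^t * ersR K s0 := by
    rw [hmn1, ersR_add_mul_card]
  have hsign : ((-1 : K[X]))^(m + n - 1) = (-1)^s0 * (-1)^t := by
    rw [hmn1, pow_add, mul_comm t p, pow_mul, neg_one_pow_card]
  have hXexp : (X : K[X])^m * X^n * X^r = X^p * X^(p*t) := by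
    rw [← pow_add, ← pow_add, ← pow_add]
    congr 1
    have h1 : p * t + s0 = m + n - 1 := hdm
    have h2 : r = p - 1 - s0 := hrdef
    have h3 : s0 < p := hs0lt
    have h4 : 1 ≤ m + n := hmn
    omega
  have hnegpow : ((-(X^p) : K[X]))^t = (-1)^t * X^(p*t) := by
    rw [neg_pow, ← pow_mul]
  have heven : ((-1 : K[X]))^t * (-1)^t = 1 := by
    rw [← pow_add]
    exact Even.neg_one_pow ⟨t, rfl⟩
  rw [hers, hsign, hnegpow]
  linear_combination ((-1 : K[X])^s0 * ersR K s0) * hXexp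
    - ((-1 : K[X])^s0 * X^p * X^(p*t) * ersR K s0) * heven
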